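/- Let c : ℕ × ℕ → ℂ. Suppose that for every finitely supported sequence a : ℕ → ℂ with ∑_n |a_n|² = 1, the function θ ↦ ∑_{n,m} c_{n,m} e^{i(n-m)θ} conj(a_n) a_m takes nonnegative real values for almost every θ ∈ [0,2π) and satisfies (2π)^{-1} ∫_0^{2π} ∑_{n,m} c_{n,m} e^{i(n-m)θ} conj(a_n) a_m dθ = 1. Then c is a phase matrix: for every finitely supported a : ℕ → ℂ the number ∑_{n,m} conj(a_n) c_{n,m} a_m is a nonnegative real, c_{m,n} = conj(c_{n,m}) for all n, m, and c_{n,n} = 1 for all n. -/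

import Mathlib

open MeasureTheory Real Set
open scoped ComplexConjugate ComplexOrder

/-- The phase probability density `θ ↦ ∑_{n,m} c_{n,m} e^{i(n-m)θ} conj(a_n) a_m`
associated with a matrix `c : ℕ × ℕ → ℂ` and a finitely supported sequence `a`. -/
noncomputable def phaseDensity (c : ℕ → ℕ → ℂ) (a : ℕ →₀ ℂ) (θ : ℝ) : ℂ :=
  a.sum fun n an => a.sum fun m am =>
    c n m * Complex.exp (Complex.I * ((n : ℂ) - (m : ℂ)) * (θ : ℂ)) * conj an * am

private lemma qform_eq (c : ℕ → ℕ → ℂ) (a : ℕ →₀ ℂ) (s : Finset ℕ) (hs : a.support ⊆ s) :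
    (a.sum fun n an => a.sum fun m am => conj an * c n m * am)
      = ∑ n ∈ s, ∑ m ∈ s, conj (a n) * c n m * a m := by
  rw [Finsupp.sum_of_support_subset a hs _ (by intro i _; simp)]
  refine Finset.sum_congr rfl fun n _ => ?_
  rw [Finsupp.sum_of_support_subset a hs _ (by intro i _; simp)]

private lemma phaseDensity_eq_sum (c : ℕ → ℕ → ℂ) (a : ℕ →₀ ℂ) (u : Finset ℕ)
    (hu : a.support ⊆ u) (θ : ℝ) :
    phaseDensity c a θ = ∑ n ∈ u, ∑ m ∈ u,
      c n m * Complex.exp (Complex.I * ((n : ℂ) - (m : ℂ)) * (θ : ℂ)) * conj (a n) * a m := by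
  unfold phaseDensity
  rw [Finsupp.sum_of_support_subset a hu _ (by intro i _; simp)]
  exact Finset.sum_congr rfl fun n _ =>
    Finsupp.sum_of_support_subset a hu _ (by intro i _; simp)

private lemma phaseDensity_continuous (c : ℕ → ℕ → ℂ) (a : ℕ →₀ ℂ) :
    Continuous fun θ : ℝ => phaseDensity c a θ := by
  have : ∀ θ : ℝ, phaseDensity c a θ = ∑ n ∈ a.support, ∑ m ∈ a.support,
      c n m * Complex.exp (Complex.I * ((n : ℂ) - (m : ℂ)) * (θ : ℂ)) * conj (a n) * a m :=
    fun θ => phaseDensity_eq_sum c a a.support subset_rfl θ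
  simp only [this]
  refine continuous_finset_sum _ fun n _ => continuous_finset_sum _ fun m _ => ?_
  fun_prop

private lemma nonneg_at_zero {f : ℝ → ℂ} (hf : Continuous f)
    (h : ∀ᵐ θ ∂(volume.restrict (Ico (0 : ℝ) (2 * π))), 0 ≤ f θ) : 0 ≤ f 0 := by
  have h' : ∀ᵐ θ, θ ∈ Ico (0 : ℝ) (2 * π) → 0 ≤ f θ :=
    (ae_restrict_iff' measurableSet_Ico).mp h
  have hmu : volume {θ : ℝ | ¬ (θ ∈ Ico (0 : ℝ) (2 * π) → 0 ≤ f θ)} = 0 := ae_iff.mp h'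
  have key : ∀ k : ℕ, ∃ θ : ℝ, θ ∈ Ioo (0 : ℝ) (min (1 / (k + 1)) π) ∧ 0 ≤ f θ := by
    intro k
    by_contra hcon
    push_neg at hcon
    have hεpos : 0 < min (1 / (k + 1 : ℝ)) π := lt_min (by positivity) pi_pos
    have hsub : Ioo (0 : ℝ) (min (1 / (k + 1)) π) ⊆
        {θ : ℝ | ¬ (θ ∈ Ico (0 : ℝ) (2 * π) → 0 ≤ f θ)} := by
      intro θ hθ
      have hθico : θ ∈ Ico (0 : ℝ) (2 * π) := by
        refine ⟨hθ.1.le, lt_of_lt_of_le (lt_of_lt_of_le hθ.2 (min_le_right _ _)) ?_⟩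
        nlinarith [pi_pos]
      exact fun himp => hcon θ hθ (himp hθico)
    have := measure_mono_null hsub hmu
    rw [Real.volume_Ioo, sub_zero, ENNReal.ofReal_eq_zero] at this
    exact absurd this (not_le.mpr hεpos)
  choose θ hθmem hθpos using key
  have hθ0 : Filter.Tendsto θ Filter.atTop (nhds 0) := by
    have hb : Filter.Tendsto (fun k : ℕ => 1 / (k + 1 : ℝ)) Filter.atTop (nhds 0) :=
      tendsto_one_div_add_atTop_nhds_zero_nat
    refine squeeze_zero (fun k => (hθmem k).1.le) (fun k => ?_) hb
    exact ((hθmem k).2.le.trans (min_le_left _ _))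
  have htend : Filter.Tendsto (fun k => f (θ k)) Filter.atTop (nhds (f 0)) :=
    (hf.tendsto 0).comp hθ0
  exact ge_of_tendsto' htend hθpos

private lemma phaseDensity_smul (c : ℕ → ℕ → ℂ) (a : ℕ →₀ ℂ) (s : ℂ) (θ : ℝ) :
    phaseDensity c (s • a) θ = conj s * s * phaseDensity c a θ := by
  rw [phaseDensity_eq_sum c (s • a) a.support Finsupp.support_smul,
    phaseDensity_eq_sum c a a.support subset_rfl, Finset.mul_sum]
  refine Finset.sum_congr rfl fun n _ => ?_
  rw [Finset.mul_sum]
  refine Finset.sum_congr rfl fun m _ => ?_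
  simp only [Finsupp.smul_apply, smul_eq_mul, map_mul]
  ring

private lemma qpair (c : ℕ → ℕ → ℂ) {n m : ℕ} (hnm : n ≠ m) (x y : ℂ) :
    ((Finsupp.single n x + Finsupp.single m y).sum fun i ai =>
      (Finsupp.single n x + Finsupp.single m y).sum fun j aj => conj ai * c i j * aj)
      = conj x * c n n * x + conj x * c n m * y + conj y * c m n * x + conj y * c m m * y := by
  have hsupp : (Finsupp.single n x + Finsupp.single m y).support ⊆ ({n, m} : Finset ℕ) := by
    refine Finsupp.support_add.trans (Finset.union_subset ?_ ?_)
    · exact (Finsupp.support_single_subset).trans (by simp)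
    · exact (Finsupp.support_single_subset).trans (by simp)
  rw [qform_eq c _ {n, m} hsupp]
  have hn : (Finsupp.single n x + Finsupp.single m y) n = x := by
    simp [Finsupp.single_apply, hnm.symm]
  have hm : (Finsupp.single n x + Finsupp.single m y) m = y := by
    simp [Finsupp.single_apply, hnm]
  rw [Finset.sum_pair hnm, Finset.sum_pair hnm, Finset.sum_pair hnm, hn, hm]
  ring

/-- **Necessity: positivity and normalization of the densities force a phase matrix.**
If for every finitely supported `a : ℕ → ℂ` with `∑_n |a_n|² = 1` the function
`θ ↦ ∑_{n,m} c_{n,m} e^{i(n-m)θ} conj(a_n) a_m` is a.e. nonnegative on `[0,2π)` and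
normalized, `(2π)⁻¹ ∫₀^{2π} ∑_{n,m} c_{n,m} e^{i(n-m)θ} conj(a_n) a_m dθ = 1`, then
`c` is a phase matrix: it is positive semidefinite, hermitian, and `c_{n,n} = 1`. -/
theorem phase_matrix_of_prob_densities
    (c : ℕ → ℕ → ℂ)
    (h : ∀ a : ℕ →₀ ℂ, (a.sum fun _ x => ‖x‖ ^ 2) = 1 →
      (∀ᵐ θ ∂(volume.restrict (Ico (0 : ℝ) (2 * π))), 0 ≤ phaseDensity c a θ) ∧
      ((1 / (2 * π) : ℝ) : ℂ) * ∫ θ in Ico (0 : ℝ) (2 * π), phaseDensity c a θ = 1) :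
    (∀ a : ℕ →₀ ℂ, 0 ≤ a.sum fun n an => a.sum fun m am => conj an * c n m * am) ∧
    (∀ n m : ℕ, c m n = conj (c n m)) ∧
    (∀ n : ℕ, c n n = 1) := by
  -- the quadratic form equals the density at θ = 0
  have hQ0 : ∀ a : ℕ →₀ ℂ,
      (a.sum fun n an => a.sum fun m am => conj an * c n m * am) = phaseDensity c a 0 := by
    intro a
    rw [qform_eq c a a.support subset_rfl, phaseDensity_eq_sum c a a.support subset_rfl]
    refine Finset.sum_congr rfl fun n _ => Finset.sum_congr rfl fun m _ => ?_
    simp only [Complex.ofReal_zero, mul_zero, Complex.exp_zero]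
    ring
  -- diagonal
  have hdiag : ∀ n : ℕ, c n n = 1 := by
    intro n
    have hnorm : ((Finsupp.single n (1 : ℂ)).sum fun _ x => ‖x‖ ^ 2) = 1 := by
      rw [Finsupp.sum_single_index (by simp)]; simp
    have h2 := (h _ hnorm).2
    have hpd : ∀ θ : ℝ, phaseDensity c (Finsupp.single n (1 : ℂ)) θ = c n n := by
      intro θ
      unfold phaseDensity
      rw [Finsupp.sum_single_index (by simp), Finsupp.sum_single_index (by simp)]
      simp
    simp only [hpd] at h2
    rw [setIntegral_const, measureReal_def, Real.volume_Ico, sub_zero,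
      ENNReal.toReal_ofReal (by positivity), Complex.real_smul] at h2
    have h2π : ((2 * π : ℝ) : ℂ) ≠ 0 := by
      simp [Complex.ofReal_ne_zero, pi_ne_zero]
    rw [← h2]
    push_cast
    field_simp
  -- positivity
  have hpos : ∀ a : ℕ →₀ ℂ,
      0 ≤ a.sum fun n an => a.sum fun m am => conj an * c n m * am := by
    intro a
    rcases eq_or_ne a 0 with rfl | ha
    · simp
    · set t : ℝ := a.sum fun _ x => ‖x‖ ^ 2 with ht
      have htpos : 0 < t := by
        rw [ht, Finsupp.sum]
        refine Finset.sum_pos' (fun i _ => by positivity) ?_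
        obtain ⟨i, hi⟩ := Finsupp.support_nonempty_iff.mpr ha
        exact ⟨i, hi, pow_pos (norm_pos_iff.mpr (Finsupp.mem_support_iff.mp hi)) 2⟩
      set s : ℂ := (((Real.sqrt t)⁻¹ : ℝ) : ℂ) with hs
      have hst : conj s * s = ((t⁻¹ : ℝ) : ℂ) := by
        rw [hs, Complex.conj_ofReal, ← Complex.ofReal_mul]
        congr 1
        rw [← Real.sqrt_inv]
        exact Real.mul_self_sqrt (by positivity)
      have hnorm : ((s • a).sum fun _ x => ‖x‖ ^ 2) = 1 := by
        rw [Finsupp.sum_of_support_subset (s • a) Finsupp.support_smul _ (by intro i _; simp)]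
        have : ∀ i ∈ a.support, ‖(s • a) i‖ ^ 2 = t⁻¹ * ‖a i‖ ^ 2 := by
          intro i _
          rw [Finsupp.smul_apply, smul_eq_mul, norm_mul, mul_pow, hs]
          congr 1
          rw [Complex.norm_real, Real.norm_eq_abs, sq_abs, ← Real.sqrt_inv]
          exact Real.sq_sqrt (by positivity)
        rw [Finset.sum_congr rfl this, ← Finset.mul_sum]
        have : (∑ i ∈ a.support, ‖a i‖ ^ 2) = t := by rw [ht, Finsupp.sum]
        rw [this, inv_mul_cancel₀ (ne_of_gt htpos)]
      have hd := (h (s • a) hnorm).1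
      have h0 : 0 ≤ phaseDensity c (s • a) 0 :=
        nonneg_at_zero (phaseDensity_continuous c (s • a)) hd
      rw [phaseDensity_smul, hst] at h0
      have h0' : 0 ≤ ((t : ℝ) : ℂ) * (((t⁻¹ : ℝ) : ℂ) * phaseDensity c a 0) :=
        mul_nonneg (by rw [Complex.zero_le_real]; exact htpos.le) h0
      rw [← mul_assoc, ← Complex.ofReal_mul, mul_inv_cancel₀ (ne_of_gt htpos)] at h0'
      simpa [hQ0 a] using h0'
  refine ⟨hpos, ?_, hdiag⟩
  -- hermitian
  intro n m
  rcases eq_or_ne n m with rfl | hnm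
  · rw [hdiag n, map_one]
  · have him : ∀ a : ℕ →₀ ℂ,
        (a.sum fun n an => a.sum fun m am => conj an * c n m * am).im = 0 := by
      intro a
      have := (Complex.le_def.mp (hpos a)).2
      simpa using this.symm
    have h1 := him (Finsupp.single n (1 : ℂ) + Finsupp.single m (1 : ℂ))
    have h2 := him (Finsupp.single n (1 : ℂ) + Finsupp.single m Complex.I)
    rw [qpair c hnm] at h1 h2
    rw [hdiag n, hdiag m] at h1 h2
    simp only [map_one, one_mul, mul_one, Complex.conj_I] at h1 h2
    -- h1 : (1 + c n m + c m n + 1).im = 0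
    -- h2 : (1 + c n m * I + -I * c m n * 1 + -I * I).im = 0
    apply Complex.ext
    · have := h2
      simp [Complex.add_im, Complex.mul_im, Complex.mul_re, Complex.I_re, Complex.I_im,
        Complex.neg_re, Complex.neg_im] at this
      simp [Complex.conj_re]
      linarith
    · have := h1
      simp [Complex.add_im] at this
      simp [Complex.conj_im]
      linarith
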